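/- Let σ ∈ S*_{2n}, and let ν_0,...,ν_n ∈ (1/2)ℤ^{2n} satisfy the recursion ν_k = ν_{k-1} + (e_{σ(k)} − e_k + e_{k*} − e_{σ(k)*})/2 with all ν_k ∈ Conv({e_j − e_{j*} : j}) and ν_0 = e_j − e_{j*} for some j. If i is minimal with ν_{i-1} ≠ ν_i (equivalently, minimal with σ(i) ≠ i), then j = i or j = σ(i)*. -/
import Mathlib


/-- `rev n i = i*` where `i* = 2n+1-i` (0-based). -/
def rev (n : ℕ) (i : Fin (2 * n)) : Fin (2 * n) :=
  ⟨2 * n - 1 - i.val, by have := i.isLt; omega⟩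

/-- standard basis vector of ℝ^{2n}. -/
def eR (n : ℕ) (j : Fin (2 * n)) : Fin (2 * n) → ℝ := fun i => if i = j then 1 else 0

lemma rev_rev (n : ℕ) (i : Fin (2 * n)) : rev n (rev n i) = i := by
  have := i.isLt
  apply Fin.ext
  simp [rev]
  omega

lemma rev_ne (n : ℕ) (i : Fin (2 * n)) : rev n i ≠ i := by
  intro h
  have := congrArg Fin.val h
  have hlt := i.isLt
  simp [rev] at this
  omega

lemma sum_mul_eR (n : ℕ) (c : Fin (2 * n) → ℝ) (k : Fin (2 * n)) :
    ∑ m, c m * eR n k m = c k := by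
  simp [eR, mul_ite]

/-- let σ ∈ S*_{2n} and ν_0,...,ν_n satisfy the recursion
ν_k = ν_{k-1} + (e_{σ(k)} - e_k + e_{k*} - e_{σ(k)*})/2, all lying in
Conv({e_j - e_{j*}}), with ν_0 = e_j - e_{j*}.  If i ∈ {1,...,n} is minimal with
ν_{i-1} ≠ ν_i, then j = i or j = σ(i)*.  (i corresponds to the 0-based index
iF = ⟨i-1⟩ : Fin (2n).) -/
theorem stmt15 (n : ℕ) (hn : 2 ≤ n)
    (σ : Equiv.Perm (Fin (2 * n))) (hσ : ∀ i, σ (rev n i) = rev n (σ i))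
    (ν : ℕ → Fin (2 * n) → ℝ)
    (hrec : ∀ k : Fin (2 * n), k.val + 1 ≤ n →
      ν (k.val + 1) = fun m => ν k.val m +
        (eR n (σ k) m - eR n k m + eR n (rev n k) m - eR n (rev n (σ k)) m) / 2)
    (hconv : ∀ k ≤ n, ν k ∈ convexHull ℝ
      {v : Fin (2 * n) → ℝ | ∃ j : Fin (2 * n),
        v = fun m => eR n j m - eR n (rev n j) m})
    (j : Fin (2 * n))
    (hν0 : ν 0 = fun m => eR n j m - eR n (rev n j) m)
    (i : ℕ) (hi1 : 1 ≤ i) (hin : i ≤ n)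
    (hmin : ∀ k : ℕ, 1 ≤ k → k < i → ν k = ν (k - 1))
    (hne : ν i ≠ ν (i - 1)) :
    j = (⟨i - 1, by omega⟩ : Fin (2 * n)) ∨
      j = rev n (σ ⟨i - 1, by omega⟩) := by
  by_contra hcon
  push_neg at hcon
  have A : Fin (2 * n) := ⟨i - 1, by omega⟩
  -- name the four relevant indices
  set A : Fin (2 * n) := ⟨i - 1, by omega⟩ with hA
  set S : Fin (2 * n) := σ A with hS
  set B : Fin (2 * n) := rev n A with hB
  set T : Fin (2 * n) := rev n S with hT
  have hjA : j ≠ A := hcon.1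
  have hjT : j ≠ T := hcon.2
  -- ν (i-1) = ν 0
  have hieq : ∀ k, k ≤ i - 1 → ν k = ν 0 := by
    intro k hk
    induction k with
    | zero => rfl
    | succ m ih =>
      have h1 : ν (m + 1) = ν m := by
        have := hmin (m + 1) (by omega) (by omega)
        simpa using this
      rw [h1, ih (by omega)]
  have hprev : ν (i - 1) = fun m => eR n j m - eR n (rev n j) m := by
    rw [hieq (i - 1) le_rfl, hν0]
  -- the recursion at step i
  have hrecA : ν i = fun m => ν (i - 1) m +
      (eR n S m - eR n A m + eR n B m - eR n T m) / 2 := by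
    have h := hrec A (by simp [hA]; omega)
    have hv : (A : Fin (2 * n)).val = i - 1 := rfl
    rw [hv] at h
    have hi' : i - 1 + 1 = i := by omega
    rw [hi'] at h
    exact h
  -- σ A ≠ A
  have hSA : S ≠ A := by
    intro h
    apply hne
    rw [hrecA]
    funext m
    have hTB : T = B := by rw [hT, hB, h]
    rw [h, hTB]
    ring
  -- disequalities
  have hAB : A ≠ B := (rev_ne n A).symm
  have hST : S ≠ T := (rev_ne n S).symm
  have hTB : T ≠ B := by
    intro h
    apply hSA
    have := congrArg (rev n) h
    rwa [hT, hB, rev_rev, rev_rev] at this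
  have hjj : rev n j ≠ j := rev_ne n j
  have hj'B : rev n j ≠ B := by
    intro h
    apply hjA
    have := congrArg (rev n) h
    rwa [hB, rev_rev, rev_rev] at this
  have hj'S : rev n j ≠ S := by
    intro h
    apply hjT
    have := congrArg (rev n) h
    rwa [rev_rev, ← hT] at this
  -- the separating functional coefficients
  set c : Fin (2 * n) → ℝ := fun m =>
    if m = j then 1 else if m = rev n j then -1 else
    if m = S then 1 else if m = T then -1 else
    if m = A then -1 else if m = B then 1 else 0 with hc
  have cj : c j = 1 := by simp [hc]
  have cj' : c (rev n j) = -1 := by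
    simp only [hc]
    rw [if_neg hjj]
    simp
  have cS : c S = 1 := by
    simp only [hc]
    split_ifs with h1 h2 <;> first
      | rfl
      | exact absurd h2.symm hj'S
  have cT : c T = -1 := by
    simp only [hc]
    split_ifs with h1 h2 h3 <;> first
      | rfl
      | exact absurd h1.symm hjT
      | exact absurd h3.symm hST
  have cA : c A = -1 := by
    simp only [hc]
    split_ifs with h1 h2 h3 h4 <;> first
      | rfl
      | exact absurd h1.symm hjA
      | exact absurd h3.symm hSA
  have cB : c B = 1 := by
    simp only [hc]
    split_ifs with h1 h2 h3 h4 h5 <;> first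
      | rfl
      | exact absurd h2.symm hj'B
      | exact absurd h4.symm hTB
      | exact absurd h5.symm hAB
  have hcle : ∀ m, c m ≤ 1 := by
    intro m; simp only [hc]; split_ifs <;> norm_num
  have hcge : ∀ m, -1 ≤ c m := by
    intro m; simp only [hc]; split_ifs <;> norm_num
  -- the functional is linear
  have hlin : IsLinearMap ℝ (fun x : Fin (2 * n) → ℝ => ∑ m, c m * x m) := by
    constructor
    · intro x y
      simp [Pi.add_apply, mul_add, Finset.sum_add_distrib]
    · intro a x
      simp only [Pi.smul_apply, smul_eq_mul, Finset.mul_sum]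
      exact Finset.sum_congr rfl fun m _ => by ring
  -- the bound on the convex hull
  have hsub : convexHull ℝ {v : Fin (2 * n) → ℝ | ∃ k : Fin (2 * n),
      v = fun m => eR n k m - eR n (rev n k) m} ⊆
      {x : Fin (2 * n) → ℝ | ∑ m, c m * x m ≤ 2} := by
    apply convexHull_min
    · rintro v ⟨k, rfl⟩
      simp only [Set.mem_setOf_eq]
      have hsum : ∑ m, c m * (eR n k m - eR n (rev n k) m)
          = c k - c (rev n k) := by
        simp [mul_sub, Finset.sum_sub_distrib, sum_mul_eR]
      rw [hsum]
      have h1 := hcle k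
      have h2 := hcge (rev n k)
      linarith
    · exact convex_halfSpace_le hlin 2
  have hbd : ∑ m, c m * ν i m ≤ 2 := hsub (hconv i hin)
  -- compute the value of the functional at ν i
  have hval : ∑ m, c m * ν i m = 4 := by
    calc ∑ m, c m * ν i m
        = ∑ m, (c m * eR n j m - c m * eR n (rev n j) m +
            (c m * eR n S m - c m * eR n A m + c m * eR n B m - c m * eR n T m) / 2) := by
          refine Finset.sum_congr rfl fun m _ => ?_
          simp only [hrecA, hprev]
          ring
      _ = (∑ m, c m * eR n j m) - (∑ m, c m * eR n (rev n j) m) +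
            ((∑ m, c m * eR n S m) - (∑ m, c m * eR n A m) +
             (∑ m, c m * eR n B m) - (∑ m, c m * eR n T m)) / 2 := by
          simp [Finset.sum_add_distrib, Finset.sum_sub_distrib, ← Finset.sum_div]
      _ = 4 := by
          rw [sum_mul_eR, sum_mul_eR, sum_mul_eR, sum_mul_eR, sum_mul_eR, sum_mul_eR,
            cj, cj', cS, cT, cA, cB]
          norm_num
  linarith
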